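/- For the constrained binary interaction rule v' = v + (νΔt/(ν+Δt²))·I(v,w;ρ) + (Δt²/(ν+Δt²))·(w−v), with I as in the kinetic traffic model, if 0 < Δt ≤ 1, ν > 0, v, w ∈ [0,1], then v' ∈ [0,1]. -/

import Mathlib

noncomputable def P (γ ρ : ℝ) : ℝ := 1 - ρ ^ γ

noncomputable def I (γ Δv ρ v w : ℝ) : ℝ :=
  if v < w then P γ ρ * (min (v + Δv) 1 - v)
  else if w < v then (1 - P γ ρ) * (P γ ρ * w - v)
  else 0

theorem stmt2 (γ Δv ρ v w Δt ν : ℝ) (hγ : 0 < γ) (hΔv : 0 < Δv)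
    (hρ : ρ ∈ Set.Icc (0:ℝ) 1) (hv : v ∈ Set.Icc (0:ℝ) 1)
    (hw : w ∈ Set.Icc (0:ℝ) 1) (hΔt : 0 < Δt) (hΔt1 : Δt ≤ 1) (hν : 0 < ν) :
    v + (ν * Δt / (ν + Δt ^ 2)) * I γ Δv ρ v w + (Δt ^ 2 / (ν + Δt ^ 2)) * (w - v)
      ∈ Set.Icc (0:ℝ) 1 := by
  obtain ⟨hρ0, hρ1⟩ := hρ
  obtain ⟨hv0, hv1⟩ := hv
  obtain ⟨hw0, hw1⟩ := hw
  have hS : 0 < ν + Δt ^ 2 := by positivity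
  have hP0 : 0 ≤ P γ ρ := by
    simp only [P, sub_nonneg]
    exact Real.rpow_le_one hρ0 hρ1 hγ.le
  have hP1 : P γ ρ ≤ 1 := by
    simp only [P]
    have := Real.rpow_nonneg hρ0 γ
    linarith
  have ha : 0 ≤ ν * Δt / (ν + Δt ^ 2) := by positivity
  have hb : 0 ≤ Δt ^ 2 / (ν + Δt ^ 2) := by positivity
  have hab : ν * Δt / (ν + Δt ^ 2) + Δt ^ 2 / (ν + Δt ^ 2) ≤ 1 := by
    rw [← add_div, div_le_one hS]
    nlinarith
  set a := ν * Δt / (ν + Δt ^ 2) with hadef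
  set b := Δt ^ 2 / (ν + Δt ^ 2) with hbdef
  constructor
  · -- lower bound
    rcases lt_trichotomy v w with h | h | h
    · rw [I, if_pos h]
      have hm : v ≤ min (v + Δv) 1 := le_min (by linarith) hv1
      have hI0 : 0 ≤ P γ ρ * (min (v + Δv) 1 - v) :=
        mul_nonneg hP0 (by linarith)
      nlinarith [mul_nonneg hb (by linarith : (0:ℝ) ≤ w - v)]
    · rw [I, if_neg (by simp [h]), if_neg (by simp [h])]
      simp [h] at *
      linarith
    · rw [I, if_neg (by linarith), if_pos h]
      have hI : -v ≤ (1 - P γ ρ) * (P γ ρ * w - v) := by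
        have h1 : P γ ρ * w - v ≤ 0 := by nlinarith
        nlinarith
      nlinarith [mul_le_mul_of_nonneg_left hI ha,
        mul_le_mul_of_nonneg_left (by linarith : w - v ≥ -v) hb]
  · -- upper bound
    rcases lt_trichotomy v w with h | h | h
    · rw [I, if_pos h]
      have hm : min (v + Δv) 1 ≤ 1 := min_le_right _ _
      have hI1 : P γ ρ * (min (v + Δv) 1 - v) ≤ 1 - v := by
        have hm0 : 0 ≤ min (v + Δv) 1 - v := by
          have : v ≤ min (v + Δv) 1 := le_min (by linarith) hv1
          linarith
        nlinarith
      nlinarith [mul_le_mul_of_nonneg_left hI1 ha,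
        mul_le_mul_of_nonneg_left (by linarith : w - v ≤ 1 - v) hb]
    · rw [I, if_neg (by simp [h]), if_neg (by simp [h])]
      simp [h] at *
      linarith
    · rw [I, if_neg (by linarith), if_pos h]
      have hI : (1 - P γ ρ) * (P γ ρ * w - v) ≤ 0 := by
        have h1 : P γ ρ * w ≤ v := by nlinarith
        exact mul_nonpos_of_nonneg_of_nonpos (by linarith) (by linarith)
      nlinarith [mul_nonpos_of_nonneg_of_nonpos ha hI,
        mul_nonpos_of_nonneg_of_nonpos hb (by linarith : w - v ≤ 0)]
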